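/- (Voigt–Wegener) The Boolean lattice of all subsets of an n-element set has the strong interval covering property: for all 0 ≤ j ≤ k ≤ n, the collection {S ⊆ [n] : j ≤ |S| ≤ k} is the union of max(C(n, j), C(n, k)) intervals [X, Y] = {S : X ⊆ S ⊆ Y} where |X| = j, |Y| = k and X ⊆ Y. -/

import Mathlib

open Finset

namespace VW
variable {n : ℕ}

def res (n : ℕ) [NeZero n] (t : ℤ) : Fin n :=
  ⟨(t % (n:ℤ)).toNat, by
    have hn : (0:ℤ) < n := by exact_mod_cast Nat.pos_of_ne_zero (NeZero.ne n)
    have h1 : 0 ≤ t % n := Int.emod_nonneg t (ne_of_gt hn)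
    have h2 : t % n < n := Int.emod_lt_of_pos t hn
    omega⟩

variable [NeZero n]

lemma res_def (t : ℤ) : ((res n t : Fin n) : ℤ) = t % n := by
  have hn : (0:ℤ) < n := by exact_mod_cast Nat.pos_of_ne_zero (NeZero.ne n)
  have h1 : 0 ≤ t % n := Int.emod_nonneg t (ne_of_gt hn)
  simp only [res]
  omega

lemma res_eq_res_iff {t t' : ℤ} : res n t = res n t' ↔ t % n = t' % n := by
  constructor
  · intro h
    have := congrArg (fun v : Fin n => (v : ℤ)) h
    simpa [res_def] using this
  · intro h
    apply Fin.ext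
    simp [res, h]

lemma res_intCast (v : Fin n) : res n (v : ℤ) = v := by
  apply Fin.ext
  have h1 : ((v:ℤ)) % n = v := Int.emod_eq_of_lt (by positivity) (by exact_mod_cast v.isLt)
  simp [res, h1]

lemma res_add_mul (t c : ℤ) : res n (t + c * n) = res n t := by
  rw [res_eq_res_iff]
  simp [Int.add_mul_emod_self_left]

lemma res_eq_iff_exists {t : ℤ} {v : Fin n} : res n t = v ↔ ∃ c : ℤ, t = (v:ℤ) + c * n := by
  constructor
  · intro h
    refine ⟨t / n, ?_⟩
    have h1 : t % n = (v:ℤ) := by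
      have := congrArg (fun w : Fin n => (w:ℤ)) h
      simpa [res_def] using this
    have h2 := Int.mul_ediv_add_emod t n
    have h3 : (n:ℤ) * (t / n) = (t / n) * n := mul_comm _ _
    omega
  · rintro ⟨c, rfl⟩
    rw [res_add_mul, res_intCast]

/-- number of positions in `[a,b)` whose residue lies in `X` -/
noncomputable def cnt (X : Finset (Fin n)) (a b : ℤ) : ℕ :=
  ((Finset.Ico a b).filter (fun t => res n t ∈ X)).card

variable {X : Finset (Fin n)}

lemma cnt_add {a b c : ℤ} (hab : a ≤ b) (hbc : b ≤ c) :
    cnt X a b + cnt X b c = cnt X a c := by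
  unfold cnt
  rw [← Finset.card_union_of_disjoint, ← Finset.filter_union,
    Finset.Ico_union_Ico_eq_Ico hab hbc]
  exact Finset.disjoint_filter_filter (Finset.Ico_disjoint_Ico_consecutive a b c)

lemma cnt_le {a b : ℤ} (h : a ≤ b) : (cnt X a b : ℤ) ≤ b - a := by
  unfold cnt
  have h1 := Finset.card_filter_le (Finset.Ico a b) (fun t => res n t ∈ X)
  rw [Int.card_Ico] at h1
  omega

lemma cnt_nonneg_len {a b : ℤ} (h : b ≤ a) : cnt X a b = 0 := by
  unfold cnt
  rw [Finset.Ico_eq_empty (by omega)]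
  simp

lemma cnt_shift (a b : ℤ) : cnt X (a + n) (b + n) = cnt X a b := by
  unfold cnt
  apply Finset.card_bij (i := fun (t : ℤ) (_ : t ∈ (Finset.Ico (a + (n:ℤ)) (b + n)).filter (fun t => res n t ∈ X)) => t - n)
  · intro t ht
    simp only [Finset.mem_filter, Finset.mem_Ico] at *
    refine ⟨⟨by omega, by omega⟩, ?_⟩
    have h0 : t - (n:ℤ) + 1 * n = t := by ring
    have h2 := res_add_mul (n := n) (t - (n:ℤ)) 1
    rw [h0] at h2
    exact h2 ▸ ht.2
  · intro t _ t' _ h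
    omega
  · intro t ht
    simp only [Finset.mem_filter, Finset.mem_Ico] at *
    refine ⟨t + n, ⟨⟨by omega, by omega⟩, ?_⟩, by omega⟩
    have : t + (n:ℤ) = t + 1 * n := by ring
    rw [this, res_add_mul]
    exact ht.2

lemma cnt_period (a : ℤ) : cnt X a (a + n) = X.card := by
  unfold cnt
  apply Finset.card_bij (i := fun (t : ℤ) (_ : t ∈ (Finset.Ico a (a + (n:ℤ))).filter (fun t => res n t ∈ X)) => res n t)
  · intro t ht
    exact (Finset.mem_filter.mp ht).2
  · intro t ht t' ht' h
    simp only [Finset.mem_filter, Finset.mem_Ico] at ht ht'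
    rw [res_eq_res_iff] at h
    have h2 := Int.mul_ediv_add_emod t n
    have h3 := Int.mul_ediv_add_emod t' n
    have hd : (n:ℤ) ∣ t - t' := by
      refine Int.dvd_of_emod_eq_zero ?_
      rw [Int.sub_emod, h]
      simp
    obtain ⟨c, hc⟩ := hd
    have hn : (0:ℤ) < n := by exact_mod_cast Nat.pos_of_ne_zero (NeZero.ne n)
    have h5 : -(n:ℤ) < n * c := by omega
    have h6 : (n:ℤ) * c < n := by omega
    have hc0 : c = 0 := by
      by_contra hc0
      rcases lt_or_gt_of_ne hc0 with h7 | h7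
      · have : (n:ℤ) * c ≤ -n := by nlinarith
        omega
      · have : (n:ℤ) ≤ n * c := by nlinarith
        omega
    rw [hc0, mul_zero] at hc
    omega
  · intro v hv
    have hn : (0:ℤ) < n := by exact_mod_cast Nat.pos_of_ne_zero (NeZero.ne n)
    have hres : res n (a + ((v:ℤ) - a) % n) = v := by
      rw [res_eq_iff_exists]
      have h3 := Int.mul_ediv_add_emod ((v:ℤ) - a) n
      refine ⟨-(((v:ℤ) - a) / n), ?_⟩
      have h4 : (n:ℤ) * (((v:ℤ) - a)/n) = (((v:ℤ) - a)/n) * n := mul_comm _ _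
      have h5 : -(((v:ℤ) - a)/n) * (n:ℤ) = -((((v:ℤ) - a)/n) * n) := by ring
      omega
    refine ⟨a + ((v:ℤ) - a) % n, ?_, hres⟩
    simp only [Finset.mem_filter, Finset.mem_Ico]
    have h1 : 0 ≤ ((v:ℤ) - a) % n := Int.emod_nonneg _ (ne_of_gt hn)
    have h2 : ((v:ℤ) - a) % n < n := Int.emod_lt_of_pos _ hn
    exact ⟨⟨by omega, by omega⟩, by rw [hres]; exact hv⟩

/-- path value: `f t - f s = 2*(X-count in [s,t)) - (t-s)` -/
noncomputable def pf (X : Finset (Fin n)) (t : ℤ) : ℤ :=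
  if 0 ≤ t then 2 * cnt X 0 t - t else -(2 * (cnt X t 0 : ℤ)) - t

lemma pf_sub {a b : ℤ} (h : a ≤ b) : pf X b - pf X a = 2 * cnt X a b - (b - a) := by
  unfold pf
  rcases le_or_gt 0 a with ha | ha
  · have hb : (0:ℤ) ≤ b := le_trans ha h
    have := cnt_add (X := X) ha h
    simp only [if_pos ha, if_pos hb]
    omega
  · rcases le_or_gt 0 b with hb | hb
    · have := cnt_add (X := X) (le_of_lt ha) hb
      simp only [if_pos hb, if_neg (not_le.mpr ha)]
      omega
    · have := cnt_add (X := X) h (le_of_lt hb)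
      simp only [if_neg (not_le.mpr ha), if_neg (not_le.mpr hb)]
      omega

lemma pf_zero : pf X 0 = 0 := by simp [pf, cnt_nonneg_len le_rfl]

lemma pf_period (t : ℤ) : pf X (t + n) = pf X t + 2 * X.card - n := by
  have hn : (0:ℤ) ≤ n := by positivity
  have h := pf_sub (X := X) (a := t) (b := t + n) (by omega)
  rw [cnt_period] at h
  omega

lemma pf_step (t : ℤ) : pf X (t + 1) = pf X t + (if res n t ∈ X then 1 else -1) := by
  have h := pf_sub (X := X) (a := t) (b := t + 1) (by omega)
  have h2 : cnt X t (t + 1) = if res n t ∈ X then 1 else 0 := by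
    unfold cnt
    have : Finset.Ico t (t+1) = {t} := by
      ext u
      simp only [Finset.mem_Ico, Finset.mem_singleton]
      omega
    rw [this, Finset.filter_singleton]
    split <;> simp_all
  by_cases hmem : res n t ∈ X <;> simp only [hmem, if_true, if_false] at h2 ⊢ <;> omega

/-- `p` is a record position for `X`: the path reaches a strict new minimum after step `p`. -/
def Rec (X : Finset (Fin n)) (p : ℤ) : Prop :=
  ∀ a : ℤ, a ≤ p → pf X (p + 1) < pf X a

lemma rec_window (h2j : 2 * X.card ≤ n) {p : ℤ}
    (h : ∀ a : ℤ, p + 1 - n ≤ a → a ≤ p → pf X (p + 1) < pf X a) : Rec X p := by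
  intro a ha
  by_cases hw : p + 1 - n ≤ a
  · exact h a hw ha
  · push_neg at hw
    -- descend: pf a ≥ pf (a + k*n) for the copy inside the window
    have key : ∀ m : ℕ, ∀ a : ℤ, a ≤ p → (p - a).toNat = m → pf X (p + 1) < pf X a := by
      intro m
      induction m using Nat.strong_induction_on with
      | _ m ih =>
        intro a ha hm
        by_cases hw2 : p + 1 - n ≤ a
        · exact h a hw2 ha
        · push_neg at hw2
          have hn : (0:ℤ) < n := by exact_mod_cast Nat.pos_of_ne_zero (NeZero.ne n)
          have hle : a + n ≤ p := by omega
          have h1 : pf X (a + n) ≤ pf X a := by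
            have := pf_period (X := X) a
            omega
          have h2 : pf X (p + 1) < pf X (a + n) :=
            ih ((p - (a + n)).toNat) (by omega) (a + n) hle rfl
          omega
    exact key (p - a).toNat a ha rfl

lemma not_rec_of_mem {p : ℤ} (hp : res n p ∈ X) : ¬ Rec X p := by
  intro h
  have := h p le_rfl
  have := pf_step (X := X) p
  simp [hp] at this
  omega

open Classical in
/-- the set of record positions within one period, as elements of `Fin n` -/
noncomputable def recs (X : Finset (Fin n)) : Finset (Fin n) :=
  Finset.univ.filter (fun v => Rec X (v : ℤ))

open Classical in
lemma mem_recs {X : Finset (Fin n)} {v : Fin n} : v ∈ recs X ↔ Rec X (v : ℤ) := by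
  simp [recs]

lemma hn_pos : (0:ℤ) < n := by exact_mod_cast Nat.pos_of_ne_zero (NeZero.ne n)

lemma card_recs (X : Finset (Fin n)) (h2j : 2 * X.card ≤ n) :
    (recs X).card = n - 2 * X.card := by
  have hn : (0:ℤ) < n := hn_pos
  set D : ℤ := (n:ℤ) - 2 * X.card with hD
  have hD0 : 0 ≤ D := by
    have : (2 * X.card : ℤ) ≤ n := by exact_mod_cast h2j
    omega
  have hne0 : ((Finset.Icc (1 - (n:ℤ)) 0).image (pf X)).Nonempty :=
    ⟨pf X 0, Finset.mem_image_of_mem _ (by simp [Finset.mem_Icc]; omega)⟩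
  have hne1 : ((Finset.Icc (1:ℤ) n).image (pf X)).Nonempty :=
    ⟨pf X 1, Finset.mem_image_of_mem _ (by simp [Finset.mem_Icc]; omega)⟩
  set m0 := ((Finset.Icc (1 - (n:ℤ)) 0).image (pf X)).min' hne0 with hm0
  set m1 := ((Finset.Icc (1:ℤ) n).image (pf X)).min' hne1 with hm1def
  have hm0le : ∀ a : ℤ, 1 - n ≤ a → a ≤ 0 → m0 ≤ pf X a := by
    intro a h1 h2
    exact Finset.min'_le _ _ (Finset.mem_image_of_mem _ (Finset.mem_Icc.mpr ⟨h1, h2⟩))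
  have hm1le : ∀ a : ℤ, 1 ≤ a → a ≤ n → m1 ≤ pf X a := by
    intro a h1 h2
    exact Finset.min'_le _ _ (Finset.mem_image_of_mem _ (Finset.mem_Icc.mpr ⟨h1, h2⟩))
  obtain ⟨a0, ha0mem, ha0⟩ := Finset.mem_image.mp (Finset.min'_mem _ hne0)
  obtain ⟨b0, hb0mem, hb0⟩ := Finset.mem_image.mp (Finset.min'_mem _ hne1)
  rw [Finset.mem_Icc] at ha0mem hb0mem
  have hper : ∀ t : ℤ, pf X (t + n) = pf X t - D := by
    intro t; have := pf_period (X := X) t; omega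
  have hm1 : m1 = m0 - D := by
    apply le_antisymm
    · have h1 : pf X (a0 + n) = m0 - D := by rw [hper, ha0]
      have := hm1le (a0 + n) (by omega) (by omega)
      omega
    · have h1 : pf X b0 = pf X (b0 - n) - D := by
        have := hper (b0 - n); simp at this; omega
      have := hm0le (b0 - n) (by omega) (by omega)
      omega
  -- bijection between records and values in [m1, m0-1]
  have hcard : (recs X).card = (Finset.Icc m1 (m0 - 1)).card := by
    apply Finset.card_bij (i := fun (v : Fin n) (_ : v ∈ recs X) => pf X ((v:ℤ) + 1))
    · intro v hv
      have hrec := mem_recs.mp hv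
      rw [Finset.mem_Icc]
      constructor
      · exact hm1le _ (by omega) (by have := v.isLt; omega)
      · have := hrec a0 (by have := v.isLt; omega)
        omega
    · intro v hv w hw hvw
      by_contra hne
      rcases lt_trichotomy ((v:ℤ)) ((w:ℤ)) with h | h | h
      · have hrec := mem_recs.mp hw
        have := hrec ((v:ℤ) + 1) (by omega)
        omega
      · exact hne (Fin.ext (by exact_mod_cast h))
      · have hrec := mem_recs.mp hv
        have := hrec ((w:ℤ) + 1) (by omega)
        omega
    · intro v hv
      rw [Finset.mem_Icc] at hv
      classical
      set T := (Finset.Icc (1:ℤ) n).filter (fun t => pf X t ≤ v) with hT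
      have hTne : T.Nonempty := ⟨b0, by
        rw [hT, Finset.mem_filter, Finset.mem_Icc]
        exact ⟨⟨hb0mem.1, hb0mem.2⟩, by omega⟩⟩
      set t0 := T.min' hTne with ht0
      have ht0mem : t0 ∈ T := Finset.min'_mem T hTne
      rw [hT, Finset.mem_filter, Finset.mem_Icc] at ht0mem
      have ht0min : ∀ t : ℤ, 1 ≤ t → t ≤ n → pf X t ≤ v → t0 ≤ t := by
        intro t h1 h2 h3
        exact Finset.min'_le _ _ (by rw [hT, Finset.mem_filter, Finset.mem_Icc]; exact ⟨⟨h1, h2⟩, h3⟩)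
      have hprev : v < pf X (t0 - 1) := by
        rcases eq_or_lt_of_le ht0mem.1.1 with h1 | h1
        · have : pf X 0 = 0 := pf_zero
          have := hm0le 0 (by omega) le_rfl
          have h2 : t0 - 1 = 0 := by omega
          rw [h2]; omega
        · by_contra hc
          push_neg at hc
          have := ht0min (t0 - 1) (by omega) (by omega) hc
          omega
      have hval : pf X t0 = v := by
        have := pf_step (X := X) (t0 - 1)
        simp only [sub_add_cancel] at this
        have h2 := ht0mem.2
        split at this <;> omega
      have hvlt : (t0 - 1).toNat < n := by omega
      refine ⟨⟨(t0 - 1).toNat, hvlt⟩, ?_, ?_⟩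
      · rw [mem_recs]
        have hcoe : ((⟨(t0 - 1).toNat, hvlt⟩ : Fin n) : ℤ) = t0 - 1 := by
          simp; omega
        rw [hcoe]
        apply rec_window h2j
        intro a haw hale
        have h2 : pf X (t0 - 1 + 1) = v := by
          simp only [sub_add_cancel]; exact hval
        rw [h2]
        rcases le_or_gt a 0 with h3 | h3
        · have := hm0le a (by omega) h3
          omega
        · by_contra hc
          push_neg at hc
          have := ht0min a h3 (by omega) hc
          omega
      · have hcoe : ((⟨(t0 - 1).toNat, hvlt⟩ : Fin n) : ℤ) = t0 - 1 := by
          simp; omega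
        rw [hcoe]
        simp only [sub_add_cancel]
        exact hval
  rw [hcard, Int.card_Icc]
  omega

lemma mem_recs_not_mem {X : Finset (Fin n)} {v : Fin n} (h : v ∈ recs X) : v ∉ X := by
  intro hv
  exact not_rec_of_mem (by rw [res_intCast]; exact hv) (mem_recs.mp h)

/-- the top of the interval associated to `X` -/
noncomputable def phi (X : Finset (Fin n)) : Finset (Fin n) := X ∪ recs X

lemma subset_phi (X : Finset (Fin n)) : X ⊆ phi X := Finset.subset_union_left

lemma card_phi (X : Finset (Fin n)) (h2j : 2 * X.card ≤ n) :
    (phi X).card = n - X.card := by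
  unfold phi
  rw [Finset.card_union_of_disjoint, card_recs X h2j]
  · omega
  · rw [Finset.disjoint_right]
    intro v hv
    exact mem_recs_not_mem hv

lemma rec_of_arc {S X : Finset (Fin n)} {Q : Fin n → ℤ}
    (hXS : X ⊆ S)
    (hb : ∀ x ∈ X, (x:ℤ) < Q x)
    (hres : ∀ x ∈ X, res n (Q x) ∉ S)
    (hinj : ∀ x ∈ X, ∀ y ∈ X, res n (Q x) = res n (Q y) → x = y)
    (hitv : ∀ x ∈ X, ∀ t : ℤ, (x:ℤ) < t → t < Q x → (res n t ∈ X ∨ res n t ∉ S))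
    {s : Fin n} (hs : s ∈ S) (hsX : s ∉ X) : Rec X (s : ℤ) := by
  intro a ha
  have key : 2 * (cnt X a ((s:ℤ)+1) : ℤ) < (s:ℤ) + 1 - a := by
    classical
    set I := Finset.Ico a ((s:ℤ)+1) with hI
    set T1 := I.filter (fun t => res n t ∈ X) with hT1
    set T2 := I.filter (fun t => ¬ (res n t ∈ X)) with hT2
    have hsplit : T1.card + T2.card = I.card :=
      Finset.card_filter_add_card_filter_not _
    have hsmem : (s:ℤ) ∈ T2 := by
      rw [hT2, Finset.mem_filter, hI, Finset.mem_Ico]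
      exact ⟨⟨ha, by omega⟩, by rw [res_intCast]; exact hsX⟩
    have hcard12 : T1.card ≤ T2.card - 1 := by
      have hinj2 : T1.card ≤ (T2.erase (s:ℤ)).card := by
        apply Finset.card_le_card_of_injOn (fun t => t - ((res n t : Fin n) : ℤ) + Q (res n t))
        · intro t ht
          rw [hT1, Finset.mem_coe, Finset.mem_filter, hI, Finset.mem_Ico] at ht
          obtain ⟨⟨hta, hts⟩, htX⟩ := ht
          set x := res n t with hx
          obtain ⟨c, hc⟩ := res_eq_iff_exists.mp (rfl : res n t = x)
          have hiota : t - (x:ℤ) + Q x = Q x + c * n := by omega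
          have hrio : res n (t - (x:ℤ) + Q x) = res n (Q x) := by
            rw [hiota, res_add_mul]
          have hgt : (x:ℤ) < Q x := hb x htX
          -- ι t ≤ s
          have hle : t - (x:ℤ) + Q x ≤ (s:ℤ) := by
            by_contra hcon
            push_neg at hcon
            set u := (s:ℤ) - c * n with hu
            have hresu : res n u = s := by
              have : u = (s:ℤ) + (-c) * n := by ring
              rw [this, res_add_mul, res_intCast]
            have hxu : (x:ℤ) ≤ u := by omega
            have hxu' : (x:ℤ) ≠ u := by
              intro h
              rw [← h, res_intCast] at hresu
              exact hsX (hresu ▸ htX)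
            have huQ : u < Q x := by omega
            rcases hitv x htX u (by omega) huQ with h | h
            · rw [hresu] at h; exact hsX h
            · rw [hresu] at h; exact h hs
          have hne : t - (x:ℤ) + Q x ≠ (s:ℤ) := by
            intro h
            apply hres x htX
            rw [← hrio, h, res_intCast]
            exact hs
          rw [Finset.mem_coe, Finset.mem_erase]
          refine ⟨hne, ?_⟩
          rw [hT2, Finset.mem_filter, hI, Finset.mem_Ico]
          refine ⟨⟨by show a ≤ t - (x:ℤ) + Q x; omega, by show t - (x:ℤ) + Q x < (s:ℤ) + 1; omega⟩, ?_⟩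
          rw [hrio]
          intro hmem
          exact hres x htX (hXS hmem)
        · intro t ht t' ht' h
          dsimp only at h
          rw [hT1, Finset.mem_coe, Finset.mem_filter] at ht ht'
          have hx := ht.2
          have hx' := ht'.2
          have hriot : res n (t - ((res n t : Fin n):ℤ) + Q (res n t)) = res n (Q (res n t)) := by
            obtain ⟨c, hc⟩ := res_eq_iff_exists.mp (rfl : res n t = res n t)
            have : t - ((res n t : Fin n):ℤ) + Q (res n t) = Q (res n t) + c * n := by omega
            rw [this, res_add_mul]
          have hriot' : res n (t' - ((res n t' : Fin n):ℤ) + Q (res n t')) = res n (Q (res n t')) := by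
            obtain ⟨c, hc⟩ := res_eq_iff_exists.mp (rfl : res n t' = res n t')
            have : t' - ((res n t' : Fin n):ℤ) + Q (res n t') = Q (res n t') + c * n := by omega
            rw [this, res_add_mul]
          have hxeq : res n t = res n t' := by
            apply hinj _ hx _ hx'
            rw [← hriot, ← hriot', h]
          have := congrArg (fun v : Fin n => (v : ℤ)) hxeq
          rw [hxeq] at h
          omega
      have : (T2.erase (s:ℤ)).card = T2.card - 1 := Finset.card_erase_of_mem hsmem
      omega
    have hT2pos : 1 ≤ T2.card := by
      have := Finset.card_pos.mpr ⟨(s:ℤ), hsmem⟩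
      omega
    have hIcard : (I.card : ℤ) = (s:ℤ) + 1 - a := by
      rw [hI, Int.card_Ico]
      omega
    have hcnt : cnt X a ((s:ℤ)+1) = T1.card := rfl
    omega
  have hsub := pf_sub (X := X) (a := a) (b := (s:ℤ)+1) (by omega)
  omega

lemma arc_exists : ∀ (j : ℕ) (A S : Finset (Fin n)), S ⊆ A → j ≤ S.card → j ≤ (A \ S).card →
    ∃ (X : Finset (Fin n)) (Q : Fin n → ℤ),
      X ⊆ S ∧ X.card = j ∧
      (∀ x ∈ X, (x:ℤ) < Q x) ∧
      (∀ x ∈ X, res n (Q x) ∈ A \ S) ∧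
      (∀ x ∈ X, ∀ y ∈ X, res n (Q x) = res n (Q y) → x = y) ∧
      (∀ x ∈ X, ∀ t : ℤ, (x:ℤ) < t → t < Q x →
        (res n t ∉ A ∨ res n t ∈ X ∨ ∃ y ∈ X, res n t = res n (Q y))) := by
  intro j
  induction j with
  | zero =>
    intro A S _ _ _
    exact ⟨∅, fun _ => 0, by simp, by simp, by simp, by simp, by simp, by simp⟩
  | succ j ih =>
    intro A S hSA hS hAS
    classical
    have hn : (0:ℤ) < n := hn_pos
    obtain ⟨q, hq⟩ : ∃ q, q ∈ A \ S := by
      have : 0 < (A \ S).card := by omega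
      exact (Finset.card_pos.mp this).exists_mem
    obtain ⟨s0, hs0⟩ : ∃ s0, s0 ∈ S := by
      have : 0 < S.card := by omega
      exact (Finset.card_pos.mp this).exists_mem
    rw [Finset.mem_sdiff] at hq
    -- greatest S-residue position below q
    obtain ⟨t0, ht0, ht0max⟩ := Int.exists_greatest_of_bdd
      (P := fun t => t < (q:ℤ) ∧ res n t ∈ S)
      ⟨(q:ℤ), fun z hz => le_of_lt hz.1⟩
      ⟨(s0:ℤ) - n, by
        constructor
        · have := s0.isLt; have := q.isLt
          have h0 : (0:ℤ) ≤ q := by positivity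
          omega
        · have : (s0:ℤ) - n = (s0:ℤ) + (-1) * n := by ring
          rw [this, res_add_mul, res_intCast]
          exact hs0⟩
    -- least A-residue position above t0
    obtain ⟨t1, ht1, ht1min⟩ := Int.exists_least_of_bdd
      (P := fun t => t0 < t ∧ res n t ∈ A)
      ⟨t0 + 1, fun z hz => by omega⟩
      ⟨(q:ℤ), ht0.1, by rw [res_intCast]; exact hq.1⟩
    have ht1q : t1 ≤ (q:ℤ) := ht1min _ ⟨ht0.1, by rw [res_intCast]; exact hq.1⟩
    have ht1S : res n t1 ∉ S := by
      rcases eq_or_lt_of_le ht1q with h | h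
      · rw [h, res_intCast]; exact hq.2
      · intro hmem
        have := ht0max t1 ⟨h, hmem⟩
        omega
    have ht1lt : t1 < t0 + n := by
      rcases lt_or_ge t1 (t0 + n) with h | h
      · exact h
      · exfalso
        have hz : res n (t0 + n) ∈ A := by
          have : t0 + (n:ℤ) = t0 + 1 * n := by ring
          rw [this, res_add_mul]
          exact hSA ht0.2
        have := ht1min (t0 + n) ⟨by omega, hz⟩
        have ht1eq : t1 = t0 + n := by omega
        apply ht1S
        rw [ht1eq]
        have : t0 + (n:ℤ) = t0 + 1 * n := by ring
        rw [this, res_add_mul]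
        exact ht0.2
    set p := res n t0 with hp
    have hpS : p ∈ S := ht0.2
    obtain ⟨c, hc⟩ := res_eq_iff_exists.mp (rfl : res n t0 = p)
    set Qp := t1 - c * n with hQp
    have hpQp : (p:ℤ) < Qp := by omega
    have hresQp : res n Qp = res n t1 := by
      have : t1 = Qp + c * n := by omega
      rw [this, res_add_mul]
    -- recurse
    set A' := (A.erase p).erase (res n t1) with hA'
    set S' := S.erase p with hS'
    have hS'A' : S' ⊆ A' := by
      intro v hv
      rw [hS', Finset.mem_erase] at hv
      rw [hA', Finset.mem_erase, Finset.mem_erase]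
      exact ⟨fun h => ht1S (h ▸ hv.2), hv.1, hSA hv.2⟩
    have hsdiff : A' \ S' = (A \ S).erase (res n t1) := by
      ext v
      simp only [hA', hS', Finset.mem_sdiff, Finset.mem_erase]
      constructor
      · rintro ⟨⟨hv1, hv2, hv3⟩, hv4⟩
        refine ⟨hv1, hv3, ?_⟩
        intro hvS
        exact hv4 ⟨hv2, hvS⟩
      · rintro ⟨hv1, hv2, hv3⟩
        have hvp : v ≠ p := fun h => hv3 (h ▸ hpS)
        exact ⟨⟨hv1, hvp, hv2⟩, fun h => hv3 h.2⟩
    have hcards : j ≤ S'.card := by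
      rw [hS', Finset.card_erase_of_mem hpS]
      omega
    have hcards2 : j ≤ (A' \ S').card := by
      rw [hsdiff, Finset.card_erase_of_mem]
      · omega
      · rw [Finset.mem_sdiff]
        exact ⟨(Finset.mem_sdiff.mp ((hresQp ▸ ht1.2 : res n t1 ∈ A) |> fun h => Finset.mem_sdiff.mpr ⟨h, ht1S⟩)).1, ht1S⟩
    obtain ⟨X', Q', hX'S', hX'card, hQ'lt, hQ'mem, hQ'inj, hQ'itv⟩ := ih A' S' hS'A' hcards hcards2
    have hpX' : p ∉ X' := by
      intro h
      have := hX'S' h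
      rw [hS', Finset.mem_erase] at this
      exact this.1 rfl
    refine ⟨insert p X', Function.update Q' p Qp, ?_, ?_, ?_, ?_, ?_, ?_⟩
    · intro v hv
      rcases Finset.mem_insert.mp hv with h | h
      · exact h ▸ hpS
      · exact (Finset.erase_subset _ _) (hS' ▸ hX'S' h)
    · rw [Finset.card_insert_of_notMem hpX', hX'card]
    · intro x hx
      rcases Finset.mem_insert.mp hx with h | h
      · subst h
        rw [Function.update_self]
        exact hpQp
      · have hne : x ≠ p := fun hh => hpX' (hh ▸ h)
        rw [Function.update_of_ne hne _ _]
        exact hQ'lt x h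
    · intro x hx
      rcases Finset.mem_insert.mp hx with h | h
      · subst h
        rw [Function.update_self, hresQp, Finset.mem_sdiff]
        exact ⟨ht1.2, ht1S⟩
      · have hne : x ≠ p := fun hh => hpX' (hh ▸ h)
        rw [Function.update_of_ne hne _ _]
        have := hQ'mem x h
        rw [hsdiff, Finset.mem_erase] at this
        exact this.2
    · intro x hx y hy hxy
      rcases Finset.mem_insert.mp hx with h | h <;> rcases Finset.mem_insert.mp hy with h' | h'
      · rw [h, h']
      · exfalso
        subst h
        have hne : y ≠ p := fun hh => hpX' (hh ▸ h')
        rw [Function.update_self, Function.update_of_ne hne _ _] at hxy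
        have hmem := hQ'mem y h'
        rw [hsdiff, Finset.mem_erase] at hmem
        exact hmem.1 (by rw [← hxy, hresQp])
      · exfalso
        subst h'
        have hne : x ≠ p := fun hh => hpX' (hh ▸ h)
        rw [Function.update_self, Function.update_of_ne hne _ _] at hxy
        have hmem := hQ'mem x h
        rw [hsdiff, Finset.mem_erase] at hmem
        exact hmem.1 (by rw [hxy, hresQp])
      · have hne : x ≠ p := fun hh => hpX' (hh ▸ h)
        have hne' : y ≠ p := fun hh => hpX' (hh ▸ h')
        rw [Function.update_of_ne hne _ _, Function.update_of_ne hne' _ _] at hxy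
        exact hQ'inj x h y h' hxy
    · intro x hx t hxt htQ
      rcases Finset.mem_insert.mp hx with h | h
      · subst h
        rw [Function.update_self] at htQ
        left
        intro hmem
        have hu : res n (t + c * n) = res n t := res_add_mul t c
        have : t0 < t + c * n ∧ res n (t + c * n) ∈ A := by
          constructor
          · omega
          · rw [hu]; exact hmem
        have := ht1min _ this
        omega
      · have hne : x ≠ p := fun hh => hpX' (hh ▸ h)
        rw [Function.update_of_ne hne _ _] at htQ
        rcases hQ'itv x h t hxt htQ with h1 | h1 | h1
        · by_cases hA : res n t ∈ A
          · rw [hA', Finset.mem_erase, Finset.mem_erase] at h1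
            push_neg at h1
            by_cases hrt : res n t = p
            · right; left
              exact Finset.mem_insert.mpr (Or.inl hrt)
            · right; right
              refine ⟨p, Finset.mem_insert_self _ _, ?_⟩
              rw [Function.update_self, hresQp]
              by_cases hrt2 : res n t = res n t1
              · exact hrt2
              · exact absurd hA (h1 hrt2 hrt)
          · left; exact hA
        · right; left
          exact Finset.mem_insert.mpr (Or.inr h1)
        · obtain ⟨y, hy, hyeq⟩ := h1
          right; right
          refine ⟨y, Finset.mem_insert.mpr (Or.inr hy), ?_⟩
          have hne : y ≠ p := fun hh => hpX' (hh ▸ hy)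
          rw [Function.update_of_ne hne _ _]
          exact hyeq

/-- main covering lemma for the symmetric case -/
lemma cover_exists (j : ℕ) (S : Finset (Fin n)) (h2j : 2 * j ≤ n)
    (hj : j ≤ S.card) (hk : S.card ≤ n - j) :
    ∃ X : Finset (Fin n), X ⊆ S ∧ X.card = j ∧ S ⊆ phi X := by
  have hSn : S.card ≤ n := by
    have := Finset.card_le_card (Finset.subset_univ S)
    simpa using this
  have hcard : (Finset.univ \ S : Finset (Fin n)).card = n - S.card := by
    rw [Finset.card_sdiff_of_subset (Finset.subset_univ S)]
    simp
  obtain ⟨X, Q, hXS, hXcard, hQlt, hQmem, hQinj, hQitv⟩ :=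
    arc_exists j Finset.univ S (Finset.subset_univ S) hj (by omega)
  refine ⟨X, hXS, hXcard, ?_⟩
  intro v hv
  by_cases hvX : v ∈ X
  · exact subset_phi X hvX
  · apply Finset.mem_union_right
    rw [mem_recs]
    apply rec_of_arc hXS hQlt ?_ hQinj ?_ hv hvX
    · intro x hx
      exact (Finset.mem_sdiff.mp (hQmem x hx)).2
    · intro x hx t h1 h2
      rcases hQitv x hx t h1 h2 with h | h | h
      · exact absurd (Finset.mem_univ _) h
      · exact Or.inl h
      · obtain ⟨y, hy, hyeq⟩ := h
        exact Or.inr (hyeq ▸ (Finset.mem_sdiff.mp (hQmem y hy)).2)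

/-- the covering statement -/
def Covers (n j k : ℕ) : Prop :=
  ∃ F : Finset (Finset (Fin n) × Finset (Fin n)),
    F.card ≤ max (n.choose j) (n.choose k) ∧
    (∀ p ∈ F, p.1.card = j ∧ p.2.card = k ∧ p.1 ⊆ p.2) ∧
    (⋃ p ∈ F, Set.Icc p.1 p.2) = {S : Finset (Fin n) | j ≤ S.card ∧ S.card ≤ k}

lemma covers_of {n j k : ℕ} (F : Finset (Finset (Fin n) × Finset (Fin n)))
    (hcard : F.card ≤ max (n.choose j) (n.choose k))
    (hprops : ∀ p ∈ F, p.1.card = j ∧ p.2.card = k ∧ p.1 ⊆ p.2)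
    (hcover : ∀ S : Finset (Fin n), j ≤ S.card → S.card ≤ k → ∃ p ∈ F, p.1 ⊆ S ∧ S ⊆ p.2) :
    Covers n j k := by
  refine ⟨F, hcard, hprops, ?_⟩
  ext T
  simp only [Set.mem_iUnion, Set.mem_Icc, Set.mem_setOf_eq]
  constructor
  · rintro ⟨p, hp, h1, h2⟩
    obtain ⟨hc1, hc2, _⟩ := hprops p hp
    constructor
    · rw [← hc1]; exact Finset.card_le_card h1
    · rw [← hc2]; exact Finset.card_le_card h2
  · rintro ⟨h1, h2⟩
    obtain ⟨p, hp, hp1, hp2⟩ := hcover T h1 h2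
    exact ⟨p, hp, hp1, hp2⟩

lemma covers_elim {n j k : ℕ} (h : Covers n j k) :
    ∃ F : Finset (Finset (Fin n) × Finset (Fin n)),
      F.card ≤ max (n.choose j) (n.choose k) ∧
      (∀ p ∈ F, p.1.card = j ∧ p.2.card = k ∧ p.1 ⊆ p.2) ∧
      (∀ S : Finset (Fin n), j ≤ S.card → S.card ≤ k → ∃ p ∈ F, p.1 ⊆ S ∧ S ⊆ p.2) := by
  obtain ⟨F, hcard, hprops, hU⟩ := h
  refine ⟨F, hcard, hprops, ?_⟩
  intro S h1 h2
  have : S ∈ (⋃ p ∈ F, Set.Icc p.1 p.2) := by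
    rw [hU]; exact ⟨h1, h2⟩
  simp only [Set.mem_iUnion, Set.mem_Icc] at this
  obtain ⟨p, hp, hp1, hp2⟩ := this
  exact ⟨p, hp, hp1, hp2⟩

/-- monotonicity of binomial coefficients on the left half -/
lemma choose_mono_left (m : ℕ) : ∀ d a : ℕ, 2 * (a + d) ≤ m → m.choose a ≤ m.choose (a + d) := by
  intro d
  induction d with
  | zero => intro a _; simp
  | succ d ih =>
    intro a h
    have h1 : m.choose a ≤ m.choose (a + d) := ih a (by omega)
    have h2 : m.choose (a + d) ≤ m.choose (a + d + 1) :=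
      Nat.choose_le_succ_of_lt_half_left (by omega)
    calc m.choose a ≤ m.choose (a + d) := h1
    _ ≤ m.choose (a + (d+1)) := by rw [show a + (d+1) = a + d + 1 by omega]; exact h2

lemma choose_le_choose_of {m a b : ℕ} (hab : a ≤ b) (hsum : a + b ≤ m) :
    m.choose a ≤ m.choose b := by
  rcases le_or_gt (2 * b) m with h | h
  · have := choose_mono_left m (b - a) a (by omega)
    rwa [show a + (b - a) = b by omega] at this
  · have hbm : b ≤ m := by omega
    rw [← Nat.choose_symm hbm]
    have := choose_mono_left m ((m - b) - a) a (by omega)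
    rwa [show a + ((m - b) - a) = m - b by omega] at this

lemma diag_case (n j : ℕ) (hjn : j ≤ n) : Covers n j j := by
  classical
  apply covers_of ((Finset.univ.powersetCard j).image (fun X => (X, X)))
  · calc ((Finset.univ.powersetCard j).image (fun X : Finset (Fin n) => (X, X))).card
        ≤ (Finset.univ.powersetCard j).card := Finset.card_image_le
    _ = n.choose j := by rw [Finset.card_powersetCard]; simp
    _ ≤ max (n.choose j) (n.choose j) := le_max_left _ _
  · intro p hp
    obtain ⟨X, hX, rfl⟩ := Finset.mem_image.mp hp
    rw [Finset.mem_powersetCard_univ] at hX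
    exact ⟨hX, hX, le_refl _⟩
  · intro S h1 h2
    have hcard : S.card = j := le_antisymm h2 h1
    refine ⟨(S, S), Finset.mem_image.mpr ⟨S, ?_, rfl⟩, le_refl _, le_refl _⟩
    rw [Finset.mem_powersetCard_univ]
    exact hcard

lemma zero_case (n k : ℕ) (hkn : k ≤ n) : Covers n 0 k := by
  classical
  apply covers_of ((Finset.univ.powersetCard k).image (fun Y => ((∅ : Finset (Fin n)), Y)))
  · calc ((Finset.univ.powersetCard k).image (fun Y : Finset (Fin n) => ((∅ : Finset (Fin n)), Y))).card
        ≤ (Finset.univ.powersetCard k).card := Finset.card_image_le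
    _ = n.choose k := by rw [Finset.card_powersetCard]; simp
    _ ≤ max (n.choose 0) (n.choose k) := le_max_right _ _
  · intro p hp
    obtain ⟨Y, hY, rfl⟩ := Finset.mem_image.mp hp
    rw [Finset.mem_powersetCard_univ] at hY
    exact ⟨Finset.card_empty, hY, Finset.empty_subset _⟩
  · intro S _ h2
    obtain ⟨Y, hSY, hYcard⟩ := Finset.exists_superset_card_eq h2 (by simp [hkn])
    refine ⟨(∅, Y), Finset.mem_image.mpr ⟨Y, ?_, rfl⟩, Finset.empty_subset _, hSY⟩
    rw [Finset.mem_powersetCard_univ]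
    exact hYcard

lemma symmetric_case (n j k : ℕ) [NeZero n] (hjk : j ≤ k) (hsum : j + k = n) :
    Covers n j k := by
  classical
  have h2j : 2 * j ≤ n := by omega
  apply covers_of ((Finset.univ.powersetCard j).image (fun X => (X, phi X)))
  · calc ((Finset.univ.powersetCard j).image (fun X : Finset (Fin n) => (X, phi X))).card
        ≤ (Finset.univ.powersetCard j).card := Finset.card_image_le
    _ = n.choose j := by rw [Finset.card_powersetCard]; simp
    _ ≤ max (n.choose j) (n.choose k) := le_max_left _ _
  · intro p hp
    obtain ⟨X, hX, rfl⟩ := Finset.mem_image.mp hp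
    rw [Finset.mem_powersetCard_univ] at hX
    refine ⟨hX, ?_, subset_phi X⟩
    rw [card_phi X (by omega), hX]
    omega
  · intro S h1 h2
    obtain ⟨X, hXS, hXcard, hSphi⟩ := cover_exists j S h2j h1 (by omega)
    refine ⟨(X, phi X), Finset.mem_image.mpr ⟨X, ?_, rfl⟩, hXS, hSphi⟩
    rw [Finset.mem_powersetCard_univ]
    exact hXcard

lemma step_case (m j k : ℕ) (hjk : j ≤ k) (hsum : j + k + 2 ≤ m)
    (h1 : Covers m j k) (h2 : Covers m (j+1) (k+1)) : Covers (m+1) (j+1) (k+1) := by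
  classical
  obtain ⟨F1, hF1card, hF1props, hF1cover⟩ := covers_elim h1
  obtain ⟨F2, hF2card, hF2props, hF2cover⟩ := covers_elim h2
  set emb : Fin m ↪ Fin (m+1) := Fin.castSuccEmb with hemb
  set lst : Fin (m+1) := Fin.last m with hlst
  have hlast_not_mem : ∀ (X : Finset (Fin m)), lst ∉ X.map emb := by
    intro X h
    obtain ⟨w, _, hw⟩ := Finset.mem_map.mp h
    exact absurd hw (Fin.castSucc_lt_last w).ne
  set lift1 : Finset (Fin m) × Finset (Fin m) → Finset (Fin (m+1)) × Finset (Fin (m+1)) :=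
    fun p => (insert lst (p.1.map emb), insert lst (p.2.map emb)) with hlift1
  set lift2 : Finset (Fin m) × Finset (Fin m) → Finset (Fin (m+1)) × Finset (Fin (m+1)) :=
    fun p => (p.1.map emb, p.2.map emb) with hlift2
  apply covers_of ((F1.image lift1) ∪ (F2.image lift2))
  · have hb1 : F1.card ≤ m.choose k := by
      have : max (m.choose j) (m.choose k) = m.choose k :=
        max_eq_right (choose_le_choose_of hjk (by omega))
      omega
    have hb2 : F2.card ≤ m.choose (k+1) := by
      have : max (m.choose (j+1)) (m.choose (k+1)) = m.choose (k+1) :=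
        max_eq_right (choose_le_choose_of (by omega) (by omega))
      omega
    have hmax : max ((m+1).choose (j+1)) ((m+1).choose (k+1)) = (m+1).choose (k+1) :=
      max_eq_right (choose_le_choose_of (by omega) (by omega))
    have hrec : (m+1).choose (k+1) = m.choose k + m.choose (k+1) := Nat.choose_succ_succ' m k
    calc ((F1.image lift1) ∪ (F2.image lift2)).card
        ≤ (F1.image lift1).card + (F2.image lift2).card := Finset.card_union_le _ _
    _ ≤ F1.card + F2.card := Nat.add_le_add Finset.card_image_le Finset.card_image_le
    _ ≤ m.choose k + m.choose (k+1) := Nat.add_le_add hb1 hb2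
    _ = max ((m+1).choose (j+1)) ((m+1).choose (k+1)) := by omega
  · intro p hp
    rcases Finset.mem_union.mp hp with h | h
    · obtain ⟨p0, hp0, rfl⟩ := Finset.mem_image.mp h
      obtain ⟨hc1, hc2, hsub⟩ := hF1props p0 hp0
      refine ⟨?_, ?_, ?_⟩
      · rw [hlift1]
        dsimp only
        rw [Finset.card_insert_of_notMem (hlast_not_mem _), Finset.card_map, hc1]
      · rw [hlift1]
        dsimp only
        rw [Finset.card_insert_of_notMem (hlast_not_mem _), Finset.card_map, hc2]
      · rw [hlift1]
        dsimp only
        exact Finset.insert_subset_insert _ (Finset.map_subset_map.mpr hsub)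
    · obtain ⟨p0, hp0, rfl⟩ := Finset.mem_image.mp h
      obtain ⟨hc1, hc2, hsub⟩ := hF2props p0 hp0
      refine ⟨?_, ?_, ?_⟩
      · rw [hlift2]; dsimp only; rw [Finset.card_map, hc1]
      · rw [hlift2]; dsimp only; rw [Finset.card_map, hc2]
      · rw [hlift2]; dsimp only; exact Finset.map_subset_map.mpr hsub
  · intro S hS1 hS2
    set S' : Finset (Fin m) := S.preimage emb (emb.injective.injOn) with hS'
    have hmapS' : S'.map emb = S.filter (fun v => v ≠ lst) := by
      ext v
      simp only [Finset.mem_map, Finset.mem_filter, hS', Finset.mem_preimage]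
      constructor
      · rintro ⟨w, hw, rfl⟩
        exact ⟨hw, (Fin.castSucc_lt_last w).ne⟩
      · rintro ⟨hv, hvlst⟩
        rcases Fin.eq_castSucc_or_eq_last v with ⟨w, rfl⟩ | h
        · exact ⟨w, hv, rfl⟩
        · exact absurd h hvlst
    by_cases hlastS : lst ∈ S
    · have hfilter : S.filter (fun v => v ≠ lst) = S.erase lst := by
        ext v
        simp only [Finset.mem_filter, Finset.mem_erase]
        tauto
      have hScard : S'.card = S.card - 1 := by
        rw [← Finset.card_map emb, hmapS', hfilter, Finset.card_erase_of_mem hlastS]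
      obtain ⟨p, hp, hp1, hp2⟩ := hF1cover S' (by omega) (by omega)
      refine ⟨lift1 p, Finset.mem_union_left _ (Finset.mem_image_of_mem _ hp), ?_, ?_⟩
      · rw [hlift1]
        dsimp only
        apply Finset.insert_subset hlastS
        calc p.1.map emb ⊆ S'.map emb := Finset.map_subset_map.mpr hp1
        _ ⊆ S := by rw [hmapS', hfilter]; exact Finset.erase_subset _ _
      · rw [hlift1]
        dsimp only
        intro v hv
        rcases Fin.eq_castSucc_or_eq_last v with ⟨w, rfl⟩ | h
        · apply Finset.mem_insert_of_mem
          apply Finset.mem_map_of_mem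
          apply hp2
          rw [hS', Finset.mem_preimage]
          exact hv
        · rw [h]; exact Finset.mem_insert_self _ _
    · have hfilter : S.filter (fun v => v ≠ lst) = S := by
        apply Finset.filter_true_of_mem
        intro v hv
        exact fun h => hlastS (h ▸ hv)
      have hScard : S'.card = S.card := by
        rw [← Finset.card_map emb, hmapS', hfilter]
      obtain ⟨p, hp, hp1, hp2⟩ := hF2cover S' (by omega) (by omega)
      refine ⟨lift2 p, Finset.mem_union_right _ (Finset.mem_image_of_mem _ hp), ?_, ?_⟩
      · rw [hlift2]
        dsimp only
        calc p.1.map emb ⊆ S'.map emb := Finset.map_subset_map.mpr hp1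
        _ = S := by rw [hmapS', hfilter]
      · rw [hlift2]
        dsimp only
        intro v hv
        rcases Fin.eq_castSucc_or_eq_last v with ⟨w, rfl⟩ | h
        · apply Finset.mem_map_of_mem
          apply hp2
          rw [hS', Finset.mem_preimage]
          exact hv
        · subst h; exact absurd hv hlastS

lemma low_case : ∀ n j k : ℕ, j ≤ k → k ≤ n → j + k ≤ n → Covers n j k := by
  intro n
  induction n with
  | zero =>
    intro j k hjk hkn _
    obtain ⟨rfl, rfl⟩ : j = 0 ∧ k = 0 := by omega
    exact diag_case 0 0 le_rfl
  | succ m ih =>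
    intro j k hjk hkn hsum
    by_cases hdiag : j = k
    · exact hdiag ▸ diag_case (m+1) j (by omega)
    by_cases hs : j + k = m + 1
    · haveI : NeZero (m+1) := ⟨Nat.succ_ne_zero m⟩
      exact symmetric_case (m+1) j k hjk hs
    by_cases hj0 : j = 0
    · exact hj0 ▸ zero_case (m+1) k hkn
    · obtain ⟨j', rfl⟩ : ∃ j', j = j' + 1 := ⟨j - 1, by omega⟩
      obtain ⟨k', rfl⟩ : ∃ k', k = k' + 1 := ⟨k - 1, by omega⟩
      apply step_case m j' k' (by omega) (by omega)
      · exact ih j' k' (by omega) (by omega) (by omega)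
      · exact ih (j'+1) (k'+1) (by omega) (by omega) (by omega)

lemma dual_case (n j k : ℕ) (hjk : j ≤ k) (hkn : k ≤ n) (h : Covers n (n-k) (n-j)) :
    Covers n j k := by
  classical
  obtain ⟨F, hFcard, hFprops, hFcover⟩ := covers_elim h
  apply covers_of (F.image (fun p => (p.2ᶜ, p.1ᶜ)))
  · calc (F.image (fun p : Finset (Fin n) × Finset (Fin n) => (p.2ᶜ, p.1ᶜ))).card
        ≤ F.card := Finset.card_image_le
    _ ≤ max (n.choose (n-k)) (n.choose (n-j)) := hFcard
    _ = max (n.choose j) (n.choose k) := by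
        rw [Nat.choose_symm hkn, Nat.choose_symm (by omega : j ≤ n), max_comm]
  · intro p hp
    obtain ⟨p0, hp0, rfl⟩ := Finset.mem_image.mp hp
    obtain ⟨hc1, hc2, hsub⟩ := hFprops p0 hp0
    refine ⟨?_, ?_, ?_⟩
    · rw [Finset.card_compl, hc2]
      simp only [Fintype.card_fin]
      omega
    · rw [Finset.card_compl, hc1]
      simp only [Fintype.card_fin]
      omega
    · exact Finset.compl_subset_compl.mpr hsub
  · intro S h1 h2
    have hScard : S.card ≤ n := by
      have := Finset.card_le_card (Finset.subset_univ S)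
      simpa using this
    have hc : Sᶜ.card = n - S.card := by
      rw [Finset.card_compl]
      simp
    obtain ⟨p, hp, hp1, hp2⟩ := hFcover Sᶜ (by omega) (by omega)
    refine ⟨(p.2ᶜ, p.1ᶜ), Finset.mem_image_of_mem _ hp, ?_, ?_⟩
    · have := Finset.compl_subset_compl.mpr hp2
      simpa using this
    · have := Finset.compl_subset_compl.mpr hp1
      simpa using this

lemma main (n j k : ℕ) (hjk : j ≤ k) (hkn : k ≤ n) : Covers n j k := by
  rcases le_or_gt (j + k) n with h | h
  · exact low_case n j k hjk hkn h
  · apply dual_case n j k hjk hkn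
    apply low_case n (n-k) (n-j) (by omega) (by omega) (by omega)

end VW

/-- **(Voigt–Wegener).** The Boolean lattice `B(n)` has the strong interval covering
property: for all `0 ≤ j ≤ k ≤ n`, the family of subsets `S` of `[n]` with
`j ≤ |S| ≤ k` is the union of `max(C(n,j), C(n,k))` intervals `[X, Y]` with
`|X| = j`, `|Y| = k` and `X ⊆ Y`. -/
theorem stmt5 (n j k : ℕ) (hjk : j ≤ k) (hkn : k ≤ n) :
    ∃ F : Finset (Finset (Fin n) × Finset (Fin n)),
      F.card ≤ max (n.choose j) (n.choose k) ∧
      (∀ p ∈ F, p.1.card = j ∧ p.2.card = k ∧ p.1 ⊆ p.2) ∧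
      (⋃ p ∈ F, Set.Icc p.1 p.2) = {S : Finset (Fin n) | j ≤ S.card ∧ S.card ≤ k} := by
  exact VW.main n j k hjk hkn
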